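/- arXiv:1610.05565 — 4 statements merged into one kernel-verified Lean document; each statement's English description precedes it below -/
import Mathlib

section
/- Let k be a natural number and let p : ℝ → ℝ be a polynomial of degree at most k. Then p(1)^2 ≤ (k+1)^2 · ∫₀¹ p(x)^2 dx. -/
open Polynomial MeasureTheory Finset

noncomputable section DTIproof

namespace DTIproof

/-- Integral of a polynomial over `[0,1]`. -/
def J (p : Polynomial ℝ) : ℝ := ∫ x in (0:ℝ)..1, p.eval x

lemma intble (p : Polynomial ℝ) : IntervalIntegrable (fun x => p.eval x) volume 0 1 :=
  p.continuous.intervalIntegrable _ _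

lemma J_zero : J 0 = 0 := by simp [J]

lemma J_one : J 1 = 1 := by simp [J]

lemma J_add (p q : Polynomial ℝ) : J (p + q) = J p + J q := by
  simp only [J, eval_add]
  exact intervalIntegral.integral_add (intble p) (intble q)

lemma J_C_mul (a : ℝ) (p : Polynomial ℝ) : J (C a * p) = a * J p := by
  simp only [J, eval_mul, eval_C]
  exact intervalIntegral.integral_const_mul a _

lemma J_neg (p : Polynomial ℝ) : J (-p) = - J p := by
  have : (-p : Polynomial ℝ) = C (-1) * p := by ring_nf; simp [map_neg]
  rw [this, J_C_mul]; ring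

lemma J_sub (p q : Polynomial ℝ) : J (p - q) = J p - J q := by
  rw [sub_eq_add_neg, J_add, J_neg]; ring

lemma J_sum {ι : Type*} (s : Finset ι) (f : ι → Polynomial ℝ) :
    J (∑ i ∈ s, f i) = ∑ i ∈ s, J (f i) := by
  classical
  induction s using Finset.induction_on with
  | empty => simp [J_zero]
  | @insert a s h ih => rw [Finset.sum_insert h, Finset.sum_insert h, J_add, ih]

lemma J_deriv (p : Polynomial ℝ) : J (derivative p) = p.eval 1 - p.eval 0 := by
  exact intervalIntegral.integral_eq_sub_of_hasDerivAt
    (fun x _ => p.hasDerivAt x) (intble _)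

/-- Integration by parts for polynomials on `[0,1]`. -/
lemma J_ibp (p q : Polynomial ℝ) :
    J (derivative p * q) =
      p.eval 1 * q.eval 1 - p.eval 0 * q.eval 0 - J (p * derivative q) := by
  have h := J_deriv (p * q)
  rw [derivative_mul, J_add] at h
  simp only [eval_mul] at h
  linarith

/-- `W i = x^i (x-1)^i`. -/
def W (i : ℕ) : Polynomial ℝ := X ^ i * (X - C 1) ^ i

/-- `L i` is (a multiple of) the `i`-th shifted Legendre polynomial. -/
def L (i : ℕ) : Polynomial ℝ := derivative^[i] (W i)

lemma W_vanish {i r : ℕ} (h : r < i) :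
    (derivative^[r] (W i)).eval 0 = 0 ∧ (derivative^[r] (W i)).eval 1 = 0 := by
  rw [W, iterate_derivative_mul]
  constructor <;>
  · rw [eval_finset_sum]
    apply Finset.sum_eq_zero
    intro j hj
    have hj' : j ≤ r := Nat.lt_succ_iff.mp (Finset.mem_range.mp hj)
    rw [iterate_derivative_X_pow_eq_C_mul, iterate_derivative_X_sub_pow]
    have h1 : i - (r - j) ≠ 0 := by omega
    have h2 : i - j ≠ 0 := by omega
    simp [eval_smul, zero_pow h1, sub_self, zero_pow h2]

lemma ibp_iter (i : ℕ) (q : Polynomial ℝ) :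
    ∀ m, m ≤ i →
      J (L i * q) = (-1:ℝ)^m * J (derivative^[i-m] (W i) * derivative^[m] q) := by
  intro m
  induction m with
  | zero => intro _; simp [L]
  | succ m ih =>
    intro h
    have hm : m ≤ i := by omega
    have prev := ih hm
    have e : derivative^[i-m] (W i) = derivative (derivative^[i-(m+1)] (W i)) := by
      rw [show i - m = (i-(m+1)) + 1 by omega, Function.iterate_succ_apply']
    have e2 : derivative^[m+1] q = derivative (derivative^[m] q) :=
      Function.iterate_succ_apply' _ _ _
    have hv := W_vanish (show i - (m+1) < i by omega)
    have hibp := J_ibp (derivative^[i-(m+1)] (W i)) (derivative^[m] q)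
    rw [← e, hv.1, hv.2] at hibp
    rw [prev, hibp, e2]
    ring

lemma J_L_mul (i : ℕ) (q : Polynomial ℝ) :
    J (L i * q) = (-1:ℝ)^i * J (W i * derivative^[i] q) := by
  have := ibp_iter i q i le_rfl
  simpa using this

lemma orth {i : ℕ} (q : Polynomial ℝ) (h : q.natDegree < i) : J (L i * q) = 0 := by
  rw [J_L_mul, iterate_derivative_eq_zero h, mul_zero, J_zero, mul_zero]

/-- Beta integral for polynomials. -/
lemma J_beta (b a : ℕ) :
    J (X ^ a * (1 - X) ^ b) =
      (a.factorial * b.factorial : ℝ) / (a + b + 1).factorial := by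
  induction b generalizing a with
  | zero =>
    have : J (X ^ a * (1 - X) ^ 0) = J (derivative (C ((a:ℝ)+1)⁻¹ * X ^ (a+1))) := by
      congr 1
      rw [derivative_C_mul, derivative_X_pow]
      push_cast
      rw [← mul_assoc, ← C_mul, inv_mul_cancel₀ (by positivity), map_one, one_mul]
      simp
    rw [this, J_deriv]
    have ha : ((a:ℝ) + 1) ≠ 0 := by positivity
    have hf : ((a+1).factorial : ℝ) = ((a:ℝ)+1) * (a.factorial : ℝ) := by
      rw [Nat.factorial_succ]; push_cast; ring
    simp only [eval_mul, eval_C, eval_pow, eval_X, one_pow, zero_pow (by omega : a+1 ≠ 0)]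
    rw [show a + 0 + 1 = a + 1 by omega, hf]
    field_simp
    simp
  | succ b ih =>
    have hibp := J_ibp (X ^ (a+1)) ((1 - X) ^ (b+1))
    have hd1 : derivative ((X:Polynomial ℝ) ^ (a+1)) = C ((a:ℝ)+1) * X ^ a := by
      rw [derivative_X_pow]; push_cast; simp
    have hd2 : derivative ((1 - X : Polynomial ℝ) ^ (b+1)) =
        - (C ((b:ℝ)+1) * (1 - X) ^ b) := by
      rw [derivative_pow]
      have : derivative (1 - X : Polynomial ℝ) = -1 := by simp
      rw [this]
      push_cast
      ring_nf
    rw [hd1, hd2] at hibp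
    have e0 : ((X:Polynomial ℝ) ^ (a+1)).eval 0 = 0 := by simp
    have e1 : ((1 - X : Polynomial ℝ) ^ (b+1)).eval 1 = 0 := by simp
    rw [e1, e0] at hibp
    have lhs : C ((a:ℝ)+1) * X ^ a * (1 - X) ^ (b+1) =
        C ((a:ℝ)+1) * (X ^ a * (1 - X) ^ (b+1)) := by ring
    have rhs : (X:Polynomial ℝ) ^ (a+1) * -(C ((b:ℝ)+1) * (1 - X) ^ b) =
        - (C ((b:ℝ)+1) * (X ^ (a+1) * (1 - X) ^ b)) := by ring
    rw [lhs, rhs, J_C_mul, J_neg, J_C_mul] at hibp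
    have hih := ih (a+1)
    have key : ((a:ℝ)+1) * J (X ^ a * (1 - X) ^ (b+1)) =
        ((b:ℝ)+1) * J (X ^ (a+1) * (1 - X) ^ b) := by linarith
    rw [hih] at key
    have ha : ((a:ℝ) + 1) ≠ 0 := by positivity
    have hfa : (((a+1).factorial : ℝ)) = ((a:ℝ)+1) * a.factorial := by
      rw [Nat.factorial_succ]; push_cast; ring
    have hfb : (((b+1).factorial : ℝ)) = ((b:ℝ)+1) * b.factorial := by
      rw [Nat.factorial_succ]; push_cast; ring
    have hidx : a + 1 + b + 1 = a + (b+1) + 1 := by omega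
    rw [hidx] at key
    have hden : ((a + (b+1) + 1).factorial : ℝ) ≠ 0 := by
      exact_mod_cast Nat.factorial_ne_zero _
    have hfae : (a.factorial : ℝ) ≠ 0 := by exact_mod_cast Nat.factorial_ne_zero _
    rw [hfa] at key
    have : J (X ^ a * (1 - X) ^ (b+1)) =
        ((b:ℝ)+1) * (((a:ℝ)+1) * a.factorial * b.factorial) /
          (((a + (b+1) + 1).factorial : ℝ)) / ((a:ℝ)+1) := by
      field_simp at key ⊢
      linarith
    rw [this, hfb]
    field_simp

lemma J_W (i : ℕ) :
    J (W i) = (-1:ℝ)^i * ((i.factorial : ℝ) * i.factorial / (2*i+1).factorial) := by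
  have e : W i = C ((-1:ℝ))^i * (X ^ i * (1 - X) ^ i) := by
    rw [W]
    have : (X - C 1 : Polynomial ℝ) = C (-1) * (1 - X) := by
      simp only [map_neg, map_one]; ring
    rw [this, mul_pow]
    ring
  rw [e, ← C_pow, J_C_mul, J_beta]
  rw [show i + i + 1 = 2*i + 1 by omega]

lemma monic_W (i : ℕ) : (W i).Monic :=
  (monic_X_pow i).mul (((monic_X_sub_C (1:ℝ)).pow i))

lemma natDegree_W (i : ℕ) : (W i).natDegree = 2 * i := by
  rw [W, (monic_X_pow i).natDegree_mul (((monic_X_sub_C (1:ℝ)).pow i))]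
  rw [natDegree_X_pow, natDegree_pow, natDegree_X_sub_C]
  omega

lemma deriv_top (i : ℕ) :
    derivative^[2*i] (W i) = C (((2*i).factorial : ℝ)) := by
  have hdeg : (derivative^[2*i] (W i)).natDegree ≤ 0 := by
    have := natDegree_iterate_derivative (W i) (2*i)
    rw [natDegree_W] at this
    omega
  have hc : (derivative^[2*i] (W i)).coeff 0 = ((2*i).factorial : ℝ) := by
    rw [coeff_iterate_derivative]
    have : (W i).coeff (0 + 2*i) = 1 := by
      rw [zero_add, ← natDegree_W i]
      exact (monic_W i).coeff_natDegree
    rw [this, zero_add, Nat.descFactorial_self]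
    simp
  rw [eq_C_of_natDegree_le_zero hdeg, hc]

lemma J_L_sq (i : ℕ) :
    J (L i * L i) =
      ((2*i).factorial : ℝ) * ((i.factorial : ℝ) * i.factorial) / (2*i+1).factorial := by
  rw [J_L_mul]
  have : derivative^[i] (L i) = derivative^[2*i] (W i) := by
    rw [L, ← Function.iterate_add_apply]
    congr 1
    omega
  rw [this, deriv_top, mul_comm (W i), J_C_mul, J_W]
  rw [← mul_assoc]
  rw [show (-1:ℝ)^i * ((2*i).factorial : ℝ) * ((-1:ℝ)^i *
      ((i.factorial : ℝ) * i.factorial / (2*i+1).factorial)) =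
    ((-1:ℝ)^i * (-1:ℝ)^i) * (((2*i).factorial : ℝ) *
      ((i.factorial : ℝ) * i.factorial) / (2*i+1).factorial) by ring]
  rw [← pow_add, ← two_mul, pow_mul]
  norm_num

lemma L_eval_one (i : ℕ) : (L i).eval 1 = (i.factorial : ℝ) := by
  rw [L, W, iterate_derivative_mul, eval_finset_sum]
  rw [Finset.sum_eq_single i]
  · rw [Nat.sub_self, Function.iterate_zero_apply, iterate_derivative_X_sub_pow_self,
      Nat.choose_self]
    simp
  · intro j hj hne
    have hj' : j < i := by
      have := Finset.mem_range.mp hj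
      omega
    rw [iterate_derivative_X_sub_pow]
    have h2 : i - j ≠ 0 := by omega
    simp [eval_smul, sub_self, zero_pow h2]
  · intro h
    exact absurd (Finset.self_mem_range_succ i) h

lemma natDegree_L (i : ℕ) : (L i).natDegree ≤ i := by
  have := natDegree_iterate_derivative (W i) i
  rw [natDegree_W] at this
  rw [L]
  omega

lemma coeff_L_ne (i : ℕ) : (L i).coeff i ≠ 0 := by
  rw [L, coeff_iterate_derivative]
  have h1 : (W i).coeff (i + i) = 1 := by
    rw [show i + i = 2*i by omega, ← natDegree_W i]
    exact (monic_W i).coeff_natDegree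
  rw [h1]
  have hne : (i+i).descFactorial i ≠ 0 := by
    rw [Ne, Nat.descFactorial_eq_zero_iff_lt]
    omega
  rw [nsmul_eq_mul, mul_one]
  exact_mod_cast hne

variable (k : ℕ)

/-- The reproducing kernel at `x = 1` for degree-`k` polynomials on `[0,1]`. -/
def KK : Polynomial ℝ := ∑ i ∈ Finset.range (k+1), C ((2*(i:ℝ)+1) / i.factorial) * L i

lemma J_KK_mul (q : Polynomial ℝ) :
    J (KK k * q) = ∑ i ∈ Finset.range (k+1), ((2*(i:ℝ)+1) / i.factorial) * J (L i * q) := by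
  rw [KK, Finset.sum_mul, J_sum]
  refine Finset.sum_congr rfl fun i _ => ?_
  rw [mul_assoc, J_C_mul]

lemma J_KK_L {n : ℕ} (hn : n ≤ k) : J (KK k * L n) = (n.factorial : ℝ) := by
  rw [J_KK_mul]
  rw [Finset.sum_eq_single n]
  · rw [J_L_sq]
    have h1 : ((2*n+1).factorial : ℝ) = (2*(n:ℝ)+1) * ((2*n).factorial : ℝ) := by
      rw [Nat.factorial_succ]; push_cast; ring
    have h2 : ((2*n).factorial : ℝ) ≠ 0 := by exact_mod_cast Nat.factorial_ne_zero _
    have h3 : (n.factorial : ℝ) ≠ 0 := by exact_mod_cast Nat.factorial_ne_zero _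
    have h4 : (2*(n:ℝ)+1) ≠ 0 := by positivity
    rw [h1]
    field_simp
  · intro i hi hne
    rcases lt_or_gt_of_ne hne with h | h
    · -- i < n : J (L i * L n) = J (L n * L i) = 0
      rw [mul_comm (L i) (L n), orth (L i) (lt_of_le_of_lt (natDegree_L i) h)]
      ring
    · rw [orth (L n) (lt_of_le_of_lt (natDegree_L n) h)]
      ring
  · intro h
    exact absurd (Finset.mem_range.mpr (by omega)) h

lemma J_KK_one : J (KK k * 1) = 1 := by
  rw [J_KK_mul]
  rw [Finset.sum_eq_single 0]
  · have : L 0 = 1 := by simp [L, W]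
    rw [this, one_mul, J_one]
    simp
  · intro i hi hne
    rw [orth 1 (by simpa using Nat.pos_of_ne_zero hne)]
    ring
  · intro h
    exact absurd (Finset.mem_range.mpr (by omega)) h

lemma repro : ∀ d, d ≤ k → ∀ p : Polynomial ℝ, p.natDegree ≤ d →
    J (KK k * p) = p.eval 1 := by
  intro d
  induction d with
  | zero =>
    intro _ p hp
    have hp' : p = C (p.coeff 0) := eq_C_of_natDegree_le_zero hp
    rw [hp']
    have e : KK k * C (p.coeff 0) = C (p.coeff 0) * (KK k * 1) := by ring
    rw [e, J_C_mul, J_KK_one, mul_one, eval_C]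
  | succ d ih =>
    intro hk p hp
    set c : ℝ := p.coeff (d+1) / (L (d+1)).coeff (d+1) with hc
    set q : Polynomial ℝ := p - C c * L (d+1) with hqdef
    have hq : q.natDegree ≤ d := by
      rw [natDegree_le_iff_coeff_eq_zero]
      intro m hm
      rcases eq_or_lt_of_le (Nat.succ_le_of_lt hm) with h | h
      · -- m = d + 1
        rw [hqdef, coeff_sub, coeff_C_mul, ← h, hc,
          div_mul_cancel₀ _ (coeff_L_ne (d+1)), sub_self]
      · rw [hqdef, coeff_sub, coeff_C_mul,
          coeff_eq_zero_of_natDegree_lt (lt_of_le_of_lt hp h),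
          coeff_eq_zero_of_natDegree_lt (lt_of_le_of_lt (natDegree_L (d+1)) h)]
        ring
    have hpq : p = q + C c * L (d+1) := by rw [hqdef]; ring
    rw [hpq, mul_add, J_add, ih (by omega) q hq]
    have : KK k * (C c * L (d+1)) = C c * (KK k * L (d+1)) := by ring
    rw [this, J_C_mul, J_KK_L k (by omega : d+1 ≤ k), eval_add, eval_mul, eval_C,
      L_eval_one]

lemma natDegree_KK : (KK k).natDegree ≤ k := by
  apply natDegree_sum_le_of_forall_le
  intro i hi
  refine (natDegree_C_mul_le _ _).trans ?_
  exact (natDegree_L i).trans (by simpa [Nat.lt_succ_iff] using Finset.mem_range.mp hi)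

lemma KK_eval_one : (KK k).eval 1 = ((k:ℝ)+1)^2 := by
  rw [KK, eval_finset_sum]
  have e : ∀ i ∈ Finset.range (k+1),
      (C ((2*(i:ℝ)+1) / i.factorial) * L i).eval 1 = 2*(i:ℝ)+1 := by
    intro i _
    rw [eval_mul, eval_C, L_eval_one]
    have : (i.factorial : ℝ) ≠ 0 := by exact_mod_cast Nat.factorial_ne_zero _
    field_simp
  rw [Finset.sum_congr rfl e]
  have : ∀ n : ℕ, ∑ i ∈ Finset.range n, (2*(i:ℝ)+1) = (n:ℝ)^2 := by
    intro n
    induction n with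
    | zero => norm_num
    | succ m ihm =>
      rw [Finset.sum_range_succ, ihm]
      push_cast
      ring
  rw [this]
  push_cast
  ring

end DTIproof

end DTIproof

open DTIproof in
/-- One-dimensional discrete trace inequality with sharp constant `(k+1)^2`:
for any polynomial `p` of degree at most `k`,
`p(1)^2 ≤ (k+1)^2 * ∫ x in (0,1), p(x)^2`. -/
theorem discrete_trace_inequality_1d (k : ℕ) (p : Polynomial ℝ)
    (hdeg : p.degree ≤ k) :
    (p.eval 1) ^ 2 ≤ ((k : ℝ) + 1) ^ 2 * ∫ x in (0:ℝ)..1, (p.eval x) ^ 2 := by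
  have hp : p.natDegree ≤ k := Polynomial.natDegree_le_iff_degree_le.mpr hdeg
  set A : ℝ := J (p * p) with hA
  set B : ℝ := p.eval 1 with hB
  have hInt : (∫ x in (0:ℝ)..1, (p.eval x) ^ 2) = A := by
    rw [hA, J]
    congr 1
    ext x
    rw [Polynomial.eval_mul, sq]
  have hrepro : ∀ q : Polynomial ℝ, q.natDegree ≤ k → J (KK k * q) = q.eval 1 :=
    repro k k le_rfl
  have hKK2 : J (KK k * KK k) = ((k:ℝ)+1)^2 := by
    rw [hrepro (KK k) (natDegree_KK k), KK_eval_one]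
  have hKp : J (KK k * p) = B := hrepro p hp
  have key : ∀ t : ℝ, 0 ≤ A * (t * t) + (-2*B) * t + ((k:ℝ)+1)^2 := by
    intro t
    have h0 : 0 ≤ J ((KK k - C t * p) * (KK k - C t * p)) := by
      rw [J]
      apply intervalIntegral.integral_nonneg (by norm_num)
      intro x _
      rw [Polynomial.eval_mul]
      exact mul_self_nonneg _
    have e : (KK k - C t * p) * (KK k - C t * p) =
        KK k * KK k - C t * (KK k * p) - C t * (KK k * p) + C t * (C t * (p * p)) := by
      ring
    rw [e, J_add, J_sub, J_sub, J_C_mul, J_C_mul, J_C_mul, hKK2, hKp, ← hA] at h0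
    nlinarith [h0]
  have hdisc := discrim_le_zero key
  rw [discrim] at hdisc
  rw [hInt]
  nlinarith [hdisc]
end

section
/- The constant (k+1)^2 in the one-dimensional discrete trace inequality is sharp: for every natural number k there exists a nonzero polynomial p : ℝ → ℝ of degree at most k such that p(1)^2 = (k+1)^2 · ∫₀¹ p(x)^2 dx. -/
open Polynomial intervalIntegral Finset

noncomputable def PI : Polynomial ℝ →ₗ[ℝ] ℝ where
  toFun p := ∫ x in (0:ℝ)..1, p.eval x
  map_add' p q := by
    simp only [eval_add]
    exact integral_add ((p.continuous).intervalIntegrable _ _)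
      ((q.continuous).intervalIntegrable _ _)
  map_smul' c p := by
    simp only [eval_smul, smul_eq_mul, RingHom.id_apply]
    exact integral_smul c _

lemma PI_deriv (p : Polynomial ℝ) : PI (derivative p) = p.eval 1 - p.eval 0 := by
  have : ∀ x ∈ Set.uIcc (0:ℝ) 1, HasDerivAt (fun y => p.eval y) ((derivative p).eval x) x :=
    fun x _ => p.hasDerivAt x
  simpa [PI] using integral_eq_sub_of_hasDerivAt this
    (((derivative p).continuous).intervalIntegrable _ _)

lemma PI_C_mul (c : ℝ) (p : Polynomial ℝ) : PI (C c * p) = c * PI p := by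
  rw [← smul_eq_C_mul, map_smul, smul_eq_mul]

lemma PI_parts (f g : Polynomial ℝ) :
    PI (derivative f * g) =
      f.eval 1 * g.eval 1 - f.eval 0 * g.eval 0 - PI (f * derivative g) := by
  have h := PI_deriv (f * g)
  rw [derivative_mul, map_add] at h
  simp only [eval_mul] at h
  linarith

lemma PI_iter_parts (n : ℕ) (f g : Polynomial ℝ)
    (h0 : ∀ i < n, (derivative^[i] f).eval 0 = 0)
    (h1 : ∀ i < n, (derivative^[i] f).eval 1 = 0) :
    PI (derivative^[n] f * g) = (-1 : ℝ) ^ n * PI (f * derivative^[n] g) := by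
  induction n generalizing g with
  | zero => simp
  | succ n ih =>
    rw [Function.iterate_succ_apply', PI_parts,
      h0 n (by omega), h1 n (by omega),
      ih (derivative g) (fun i hi => h0 i (by omega)) (fun i hi => h1 i (by omega)),
      ← Function.iterate_succ_apply]
    ring

-- boundary vanishing for D n = X^n * (X-1)^n
lemma Dn_eval0 (n i : ℕ) (hi : i < n) :
    (derivative^[i] (X ^ n * (X - 1) ^ n : Polynomial ℝ)).eval 0 = 0 := by
  rw [iterate_derivative_mul, eval_finset_sum]
  refine Finset.sum_eq_zero fun j hj => ?_
  have hj' : j ≤ i := by simpa [Nat.lt_succ_iff] using hj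
  rw [eval_smul, iterate_derivative_X_pow_eq_C_mul]
  have hpos : 0 < n - (i - j) := by omega
  simp [zero_pow hpos.ne']

lemma Dn_eval1 (n i : ℕ) (hi : i < n) :
    (derivative^[i] (X ^ n * (X - 1) ^ n : Polynomial ℝ)).eval 1 = 0 := by
  rw [iterate_derivative_mul, eval_finset_sum]
  refine Finset.sum_eq_zero fun j hj => ?_
  have hj' : j ≤ i := by simpa [Nat.lt_succ_iff] using hj
  have : ((1:Polynomial ℝ)) = C 1 := by simp
  rw [eval_smul, this, iterate_derivative_X_sub_pow]
  have hpos : 0 < n - j := by omega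
  simp [zero_pow hpos.ne']

lemma PI_X_pow (a : ℕ) : PI (X ^ a : Polynomial ℝ) = 1 / ((a : ℝ) + 1) := by
  simp [PI, integral_pow]

lemma T_val : ∀ (b a : ℕ), PI (X ^ a * (X - 1) ^ b : Polynomial ℝ) =
    (-1 : ℝ) ^ b * a.factorial * b.factorial / (a + b + 1).factorial := by
  intro b
  induction b with
  | zero =>
    intro a
    have h : ((a:ℝ) + 1) ≠ 0 := by positivity
    simp only [pow_zero, mul_one, PI_X_pow]
    rw [Nat.factorial_succ]
    push_cast
    field_simp
    simp
  | succ b ih =>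
    intro a
    have key := PI_parts (X ^ (a + 1) : Polynomial ℝ) ((X - 1) ^ (b + 1))
    rw [derivative_X_pow] at key
    have e1 : (C (((a+1:ℕ)):ℝ) * X ^ (a + 1 - 1)) * (X - 1) ^ (b + 1)
        = C (((a+1:ℕ)):ℝ) * (X ^ a * (X - 1) ^ (b + 1)) := by
      rw [Nat.add_sub_cancel]; ring
    have e2 : (X ^ (a+1) : Polynomial ℝ) * derivative ((X - 1) ^ (b + 1))
        = C (((b+1:ℕ)):ℝ) * (X ^ (a+1) * (X - 1) ^ b) := by
      have : ((1:Polynomial ℝ)) = C 1 := by simp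
      rw [this, derivative_X_sub_C_pow, Nat.add_sub_cancel]
      push_cast; ring
    rw [e1, e2, PI_C_mul, PI_C_mul, ih (a+1)] at key
    simp only [eval_pow, eval_mul, eval_sub, eval_X, eval_one, sub_self,
      one_pow, zero_pow (Nat.succ_ne_zero _), zero_pow (Nat.succ_ne_zero b),
      mul_zero, zero_mul, sub_zero, zero_sub] at key
    have ha : ((a:ℝ) + 1) ≠ 0 := by positivity
    have hfact : ∀ m : ℕ, ((m.factorial : ℝ)) ≠ 0 := fun m => by
      exact_mod_cast m.factorial_ne_zero
    have hrw : (a + 1 + b + 1).factorial = (a + (b + 1) + 1).factorial := by ring_nf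
    have key2 : ((a:ℝ)+1) * PI (X ^ a * (X - 1) ^ (b+1) : Polynomial ℝ)
        = -(((b:ℝ)+1) * ((-1:ℝ) ^ b * (a+1).factorial * b.factorial / (a + 1 + b + 1).factorial)) := by
      push_cast at key ⊢; linarith [key]
    have : PI (X ^ a * (X - 1) ^ (b+1) : Polynomial ℝ)
        = -(((b:ℝ)+1) * ((-1:ℝ) ^ b * (a+1).factorial * b.factorial / (a + 1 + b + 1).factorial)) / ((a:ℝ)+1) := by
      field_simp at key2 ⊢
      linarith [key2]
    rw [this, hrw, Nat.factorial_succ (a), Nat.factorial_succ b]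
    have h2 : ((a + (b + 1) + 1).factorial : ℝ) ≠ 0 := hfact _
    push_cast
    field_simp
    ring

noncomputable def Leg (n : ℕ) : Polynomial ℝ := derivative^[n] (X ^ n * (X - 1) ^ n)

lemma Leg_natDegree (n : ℕ) : (Leg n).natDegree ≤ n := by
  refine (natDegree_iterate_derivative _ n).trans ?_
  have : (X ^ n * (X - 1) ^ n : Polynomial ℝ).natDegree ≤ 2 * n := by
    refine (natDegree_mul_le).trans ?_
    have h1 : (X ^ n : Polynomial ℝ).natDegree ≤ n := by simp
    have h2 : ((X - 1) ^ n : Polynomial ℝ).natDegree ≤ n := by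
      refine (natDegree_pow_le).trans ?_
      have : (X - 1 : Polynomial ℝ).natDegree ≤ 1 := by
        compute_degree
      nlinarith
    omega
  omega

lemma Leg_eval_one (n : ℕ) : (Leg n).eval 1 = n.factorial := by
  rw [Leg, iterate_derivative_mul, eval_finset_sum]
  rw [Finset.sum_eq_single n]
  · have : ((1:Polynomial ℝ)) = C 1 := by simp
    rw [this, iterate_derivative_X_sub_pow_self]
    simp
  · intro j hj hjn
    have hj' : j < n := by
      have := Finset.mem_range.mp hj; omega
    have : ((1:Polynomial ℝ)) = C 1 := by simp
    rw [this, eval_smul, iterate_derivative_X_sub_pow]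
    have hpos : 0 < n - j := by omega
    simp [zero_pow hpos.ne']
  · intro h
    exact absurd (Finset.self_mem_range_succ n) h

lemma Leg_iter_deriv (n : ℕ) :
    derivative^[n] (Leg n) = C (((2 * n).factorial : ℝ)) := by
  rw [Leg, ← Function.iterate_add_apply, iterate_derivative_mul]
  rw [Finset.sum_eq_single n]
  · have : ((1:Polynomial ℝ)) = C 1 := by simp
    rw [this, iterate_derivative_X_sub_pow_self]
    have hnn : n + n - n = n := by omega
    rw [hnn, iterate_derivative_X_pow_eq_C_mul, Nat.sub_self, pow_zero, mul_one,
      Nat.descFactorial_self]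
    have hch := Nat.choose_mul_factorial_mul_factorial (Nat.le_add_left n n)
    have : (n + n).choose n • ((C ((n.factorial : ℝ))) * (n.factorial : Polynomial ℝ))
        = C ((((n+n).choose n * n.factorial * n.factorial : ℕ)) : ℝ) := by
      rw [nsmul_eq_mul]
      simp only [← C_eq_natCast, ← C_mul]
      congr 1; push_cast; ring
    rw [this, hnn] at *
    rw [two_mul, ← hch]
  · intro j hj hjn
    rcases lt_or_gt_of_ne hjn with h | h
    · have : derivative^[n + n - j] (X ^ n : Polynomial ℝ) = 0 :=
        iterate_derivative_eq_zero (by simp; omega)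
      rw [this, zero_mul, smul_zero]
    · have : derivative^[j] ((X - 1) ^ n : Polynomial ℝ) = 0 :=
        iterate_derivative_eq_zero (by
          refine lt_of_le_of_lt ?_ h
          refine (natDegree_pow_le).trans ?_
          have : (X - 1 : Polynomial ℝ).natDegree ≤ 1 := by compute_degree
          nlinarith)
      rw [this, mul_zero, smul_zero]
  · intro h
    exact absurd (Finset.mem_range.mpr (by omega)) h

lemma PI_Leg_mul (n : ℕ) (g : Polynomial ℝ) :
    PI (Leg n * g) = (-1 : ℝ) ^ n * PI (X ^ n * (X - 1) ^ n * derivative^[n] g) :=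
  PI_iter_parts n _ g (Dn_eval0 n) (Dn_eval1 n)

lemma PI_Leg_self (n : ℕ) :
    PI (Leg n * Leg n) = (n.factorial : ℝ) ^ 2 / (2 * (n:ℝ) + 1) := by
  rw [PI_Leg_mul, Leg_iter_deriv, mul_comm (X ^ n * (X - 1) ^ n) _, PI_C_mul, T_val]
  have h1 : (n + n + 1).factorial = (2 * n + 1) * (2 * n).factorial := by
    rw [show n + n + 1 = 2 * n + 1 by ring, Nat.factorial_succ]
  rw [h1]
  have h2 : ((2 * n).factorial : ℝ) ≠ 0 := by exact_mod_cast (2*n).factorial_ne_zero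
  have h3 : (2 * (n:ℝ) + 1) ≠ 0 := by positivity
  have hsign : (-1:ℝ) ^ (n * 2) = 1 := Even.neg_one_pow ⟨n, by ring⟩
  push_cast
  field_simp
  ring_nf
  rw [hsign]

lemma PI_Leg_orth {n m : ℕ} (h : m < n) : PI (Leg n * Leg m) = 0 := by
  rw [PI_Leg_mul, iterate_derivative_eq_zero (lt_of_le_of_lt (Leg_natDegree m) h)]
  simp

lemma PI_Leg_orth' {n m : ℕ} (h : m ≠ n) : PI (Leg n * Leg m) = 0 := by
  rcases lt_or_gt_of_ne h with h | h
  · exact PI_Leg_orth h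
  · rw [mul_comm]; exact PI_Leg_orth h

lemma sum_odds (m : ℕ) : ∑ n ∈ Finset.range m, (2 * (n:ℝ) + 1) = (m:ℝ) ^ 2 := by
  induction m with
  | zero => simp
  | succ m ih => rw [Finset.sum_range_succ, ih]; push_cast; ring

/-- Sharpness of the one-dimensional discrete trace inequality: for every `k`
there is a nonzero polynomial `p` of degree at most `k` with
`p(1)^2 = (k+1)^2 * ∫ x in (0,1), p(x)^2`. -/
theorem discrete_trace_inequality_1d_sharp (k : ℕ) :
    ∃ p : Polynomial ℝ, p ≠ 0 ∧ p.degree ≤ k ∧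
      (p.eval 1) ^ 2 = ((k : ℝ) + 1) ^ 2 * ∫ x in (0:ℝ)..1, (p.eval x) ^ 2 := by
  set a : ℕ → ℝ := fun n => (2 * (n:ℝ) + 1) / n.factorial with ha
  set p : Polynomial ℝ := ∑ n ∈ Finset.range (k+1), C (a n) * Leg n with hp
  have hfact : ∀ m : ℕ, ((m.factorial : ℝ)) ≠ 0 := fun m => by
    exact_mod_cast m.factorial_ne_zero
  have heval : p.eval 1 = ((k:ℝ) + 1) ^ 2 := by
    rw [hp, eval_finset_sum]
    have : ∀ n ∈ Finset.range (k+1),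
        (C (a n) * Leg n).eval 1 = 2 * (n:ℝ) + 1 := by
      intro n _
      rw [eval_mul, eval_C, Leg_eval_one, ha]
      field_simp
    rw [Finset.sum_congr rfl this, sum_odds]
    push_cast; ring
  have hne : p ≠ 0 := by
    intro h
    rw [h, eval_zero] at heval
    have : ((k:ℝ) + 1) ^ 2 > 0 := by positivity
    linarith
  have hint : PI (p * p) = ((k:ℝ) + 1) ^ 2 := by
    rw [hp, Finset.sum_mul_sum, map_sum]
    have hterm : ∀ n ∈ Finset.range (k+1),
        (PI (∑ m ∈ Finset.range (k+1), (C (a n) * Leg n) * (C (a m) * Leg m)))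
          = 2 * (n:ℝ) + 1 := by
      intro n hn
      rw [map_sum, Finset.sum_eq_single n]
      · have e : (C (a n) * Leg n) * (C (a n) * Leg n)
            = C (a n) * (C (a n) * (Leg n * Leg n)) := by ring
        rw [e, PI_C_mul, PI_C_mul, PI_Leg_self, ha]
        have h1 : (2 * (n:ℝ) + 1) ≠ 0 := by positivity
        field_simp
      · intro m _ hmn
        have e : (C (a n) * Leg n) * (C (a m) * Leg m)
            = C (a n) * (C (a m) * (Leg n * Leg m)) := by ring
        rw [e, PI_C_mul, PI_C_mul, PI_Leg_orth' hmn, mul_zero, mul_zero]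
      · intro h; exact absurd hn h
    rw [Finset.sum_congr rfl hterm, sum_odds]
    push_cast; ring
  have hdeg : p.degree ≤ k := by
    have hnat : p.natDegree ≤ k := by
      refine natDegree_sum_le_of_forall_le _ _ (fun n hn => ?_)
      refine (natDegree_mul_le).trans ?_
      have := Leg_natDegree n
      have hn' : n ≤ k := by
        have := Finset.mem_range.mp hn; omega
      simp only [natDegree_C, zero_add]
      omega
    exact natDegree_le_iff_degree_le.mp hnat
  refine ⟨p, hne, hdeg, ?_⟩
  have hI : (∫ x in (0:ℝ)..1, (p.eval x) ^ 2) = PI (p * p) := by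
    simp [PI, sq]
  rw [hI, hint, heval]
  ring
end

section
/- Let k be a natural number and let v : ℝ × ℝ → ℝ be a tensor-product polynomial of degree at most k in each of the two variables (i.e., v ∈ Q_k). Then ∫₀¹ v(1,y)^2 dy ≤ (k+1)^2 · ∫₀¹ ∫₀¹ v(x,y)^2 dx dy. -/
open Polynomial MeasureTheory intervalIntegral

namespace TraceAux


noncomputable def W : ℝ[X] := X ^ 2 - X
noncomputable def F (n : ℕ) : ℝ[X] := W ^ n
noncomputable def R (n : ℕ) : ℝ[X] := derivative^[n] (F n)

lemma W_eval0 : W.eval 0 = 0 := by simp [W]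
lemma W_eval1 : W.eval 1 = 0 := by simp [W]

lemma monic_W : W.Monic := by
  have h : (X : ℝ[X]).degree < ((2 : ℕ) : WithBot ℕ) := by
    rw [Polynomial.degree_X]; exact_mod_cast Nat.one_lt_two
  exact monic_X_pow_sub h

lemma natDegree_W : W.natDegree = 2 := by
  have := monic_W
  have h2 : W.degree = 2 := by
    rw [W]
    rw [Polynomial.degree_sub_eq_left_of_degree_lt]
    · simp
    · rw [Polynomial.degree_X, Polynomial.degree_X_pow]; exact_mod_cast Nat.one_lt_two
  exact Polynomial.natDegree_eq_of_degree_eq_some h2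

lemma monic_F (n : ℕ) : (F n).Monic := monic_W.pow n
lemma natDegree_F (n : ℕ) : (F n).natDegree = 2 * n := by
  simp [F, Polynomial.natDegree_pow, natDegree_W, mul_comm]

/-- factorization of iterated derivatives -/
lemma factor (n : ℕ) : ∀ m, m ≤ n → ∃ q : ℝ[X], derivative^[m] (F n) = W ^ (n - m) * q := by
  intro m
  induction m with
  | zero => intro _; exact ⟨1, by simp [F]⟩
  | succ m ih =>
    intro hm
    obtain ⟨q, hq⟩ := ih (Nat.le_of_succ_le hm)
    obtain ⟨j, hj⟩ : ∃ j, n - m = j + 1 := ⟨n - (m+1), by omega⟩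
    have hj' : n - (m+1) = j := by omega
    refine ⟨C ((j : ℝ) + 1) * (derivative W * q) + W * derivative q, ?_⟩
    rw [Function.iterate_succ_apply', hq, derivative_mul, derivative_pow, hj, hj']
    rw [pow_succ]
    push_cast
    ring

lemma vanish0 {n m : ℕ} (h : m < n) : (derivative^[m] (F n)).eval 0 = 0 := by
  obtain ⟨q, hq⟩ := factor n m h.le
  obtain ⟨j, hj⟩ : ∃ j, n - m = j + 1 := ⟨n - (m+1), by omega⟩
  rw [hq, hj]
  simp [pow_succ, W_eval0]

lemma vanish1 {n m : ℕ} (h : m < n) : (derivative^[m] (F n)).eval 1 = 0 := by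
  obtain ⟨q, hq⟩ := factor n m h.le
  obtain ⟨j, hj⟩ : ∃ j, n - m = j + 1 := ⟨n - (m+1), by omega⟩
  rw [hq, hj]
  simp [pow_succ, W_eval1]

noncomputable def ii (p q : ℝ[X]) : ℝ := ∫ x in (0:ℝ)..1, p.eval x * q.eval x

lemma contig (p : ℝ[X]) : Continuous fun x : ℝ => p.eval x := p.continuous

lemma intg (p q : ℝ[X]) : IntervalIntegrable (fun x => p.eval x * q.eval x) volume 0 1 :=
  ((contig p).mul (contig q)).intervalIntegrable 0 1

lemma ibp (a b : ℝ[X]) :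
    (∫ x in (0:ℝ)..1, a.eval x * (derivative b).eval x)
      = a.eval 1 * b.eval 1 - a.eval 0 * b.eval 0
        - ∫ x in (0:ℝ)..1, (derivative a).eval x * b.eval x := by
  have h : (∫ x in (0:ℝ)..1,
      ((derivative a).eval x * b.eval x + a.eval x * (derivative b).eval x))
      = a.eval 1 * b.eval 1 - a.eval 0 * b.eval 0 := by
    apply integral_eq_sub_of_hasDerivAt (f := fun x => a.eval x * b.eval x)
    · intro x _
      exact (a.hasDerivAt x).mul (b.hasDerivAt x)
    · exact ((intg (derivative a) b).add (intg a (derivative b)))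
  rw [integral_add (intg (derivative a) b) (intg a (derivative b))] at h
  linarith

lemma orth_aux (p : ℝ[X]) (n : ℕ) : ∀ m, m ≤ n →
    ii p (R n) = (-1 : ℝ) ^ m *
      ∫ x in (0:ℝ)..1, (derivative^[m] p).eval x * (derivative^[n - m] (F n)).eval x := by
  intro m
  induction m with
  | zero => intro _; simp [ii, R]
  | succ m ih =>
    intro hm
    rw [ih (Nat.le_of_succ_le hm)]
    obtain ⟨j, hj⟩ : ∃ j, n - m = j + 1 := ⟨n - (m+1), by omega⟩
    have hj' : n - (m+1) = j := by omega
    have hjn : j < n := by omega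
    have : (derivative^[n - m] (F n)) = derivative (derivative^[j] (F n)) := by
      rw [hj, Function.iterate_succ_apply']
    rw [this, ibp (derivative^[m] p) (derivative^[j] (F n)), vanish0 hjn, vanish1 hjn, hj',
      Function.iterate_succ_apply']
    ring

lemma orth {p : ℝ[X]} {n : ℕ} (h : p.natDegree < n) : ii p (R n) = 0 := by
  rw [orth_aux p n n le_rfl, Polynomial.iterate_derivative_eq_zero h]
  simp

lemma selfint_aux (n : ℕ) :
    ii (R n) (R n) = (-1 : ℝ) ^ n * ∫ x in (0:ℝ)..1, (derivative^[2*n] (F n)).eval x * (F n).eval x := by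
  rw [orth_aux (R n) n n le_rfl]
  simp only [Nat.sub_self, Function.iterate_zero_apply, R, ← Function.iterate_add_apply]
  norm_num [two_mul]

lemma iter_deriv_add (m : ℕ) (p q : ℝ[X]) :
    derivative^[m] (p + q) = derivative^[m] p + derivative^[m] q := by
  induction m with
  | zero => simp
  | succ m ih => simp [Function.iterate_succ_apply', ih]

lemma g_small (n : ℕ) : F n - X ^ (2*n) = 0 ∨ (F n - X ^ (2*n)).natDegree < 2*n := by
  by_cases h0 : F n - X ^ (2*n) = 0
  · exact Or.inl h0
  right
  have hle : (F n - X ^ (2*n)).natDegree ≤ 2*n :=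
    (Polynomial.natDegree_sub_le _ _).trans (by simp [natDegree_F])
  have hco : (F n - X ^ (2*n)).coeff (2*n) = 0 := by
    simp only [Polynomial.coeff_sub, Polynomial.coeff_X_pow, if_pos rfl]
    rw [← natDegree_F n]
    simp [(monic_F n).coeff_natDegree]
  rcases lt_or_eq_of_le hle with h | h
  · exact h
  · exact absurd (Polynomial.leadingCoeff_eq_zero.mp
      (by rw [Polynomial.leadingCoeff, h]; exact hco)) h0

lemma top_deriv (n : ℕ) : derivative^[2*n] (F n) = C (((2*n).factorial : ℝ)) := by
  have hFg : F n = X ^ (2*n) + (F n - X ^ (2*n)) := by ring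
  rw [hFg, iter_deriv_add, Polynomial.iterate_derivative_X_pow_eq_C_mul]
  have hz : derivative^[2*n] (F n - X ^ (2*n)) = 0 := by
    rcases g_small n with h | h
    · simp [h]
    · exact Polynomial.iterate_derivative_eq_zero h
  rw [hz, add_zero, Nat.sub_self, pow_zero, mul_one, Nat.descFactorial_self]

lemma coeff_R (n : ℕ) : (R n).coeff n = (((2*n).descFactorial n : ℕ) : ℝ) := by
  have hFg : F n = X ^ (2*n) + (F n - X ^ (2*n)) := by ring
  have hR : R n = derivative^[n] (F n) := rfl
  rw [hR, hFg, iter_deriv_add, Polynomial.iterate_derivative_X_pow_eq_C_mul, Polynomial.coeff_add]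
  have hz : (derivative^[n] (F n - X ^ (2*n))).coeff n = 0 := by
    rcases g_small n with h | h
    · simp [h]
    · apply Polynomial.coeff_eq_zero_of_natDegree_lt
      have := Polynomial.natDegree_iterate_derivative (F n - X ^ (2*n)) n
      omega
  rw [hz, add_zero]
  have h2 : 2*n - n = n := by omega
  rw [h2]
  simp [Polynomial.coeff_C_mul, Polynomial.coeff_X_pow]

lemma natDegree_R (n : ℕ) : (R n).natDegree ≤ n := by
  have h := Polynomial.natDegree_iterate_derivative (F n) n
  rw [natDegree_F] at h
  have : (R n).natDegree = (derivative^[n] (F n)).natDegree := rfl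
  omega

lemma eval1_R (n : ℕ) : (R n).eval 1 = (n.factorial : ℝ) := by
  have hW : W = (X - C 1) * X := by rw [W]; ring_nf; simp
  have hF : F n = (X - C 1)^n * X^n := by rw [F, hW, mul_pow]
  have hR : R n = derivative^[n] ((X - C 1)^n * X^n) := by rw [R, hF]
  rw [hR, Polynomial.iterate_derivative_mul, Polynomial.eval_finset_sum,
    Finset.sum_eq_single 0]
  · rw [Nat.sub_zero, Polynomial.iterate_derivative_X_sub_pow]
    simp [Nat.descFactorial_self]
  · intro j hj hj0
    rw [Polynomial.iterate_derivative_X_sub_pow]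
    have hjn : j ≤ n := Nat.lt_succ_iff.mp (Finset.mem_range.mp hj)
    have he : n - (n - j) = j := by omega
    rw [he]
    simp [Polynomial.eval_smul, zero_pow hj0]
  · intro h; simp at h

lemma intF (n : ℕ) :
    (∫ x in (0:ℝ)..1, (F n).eval x)
      = (-1 : ℝ)^n * ((n.factorial : ℝ))^2 / ((2*n+1).factorial : ℝ) := by
  induction n with
  | zero => norm_num [F]
  | succ n ih =>
    have hWd : derivative W = C 2 * X - 1 := by
      rw [W]; simp [derivative_X_pow]; rw [← C_1, ← C_add]; norm_num
    have hpoly : derivative (F (n+1) * (C 2 * X - 1))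
        = C (4*(n:ℝ)+6) * F (n+1) + C ((n:ℝ)+1) * F n := by
      have hd2 : derivative (C 2 * X - 1 : ℝ[X]) = C 2 := by simp
      simp only [F, derivative_mul, derivative_pow, hWd, hd2, Nat.add_sub_cancel]
      have hC1 : C ((n:ℝ)+1) = ((n:ℕ) : ℝ[X]) + 1 := by
        rw [map_add, map_one, Polynomial.C_eq_natCast]
      have hC2 : C (4*(n:ℝ)+6) = 4 * ((n:ℕ) : ℝ[X]) + 6 := by
        rw [map_add, map_mul, Polynomial.C_eq_natCast]
        simp [map_ofNat]
      rw [hC1, hC2, Polynomial.C_eq_natCast]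
      have h2 : (C (2:ℝ) : ℝ[X]) = 2 := by simp [map_ofNat]
      rw [h2, show W^(n+1) = W^n * W from pow_succ W n, W]
      push_cast
      ring
    have hG0 : (F (n+1) * (C 2 * X - 1)).eval 0 = 0 := by
      simp [F, W, pow_succ]
    have hG1 : (F (n+1) * (C 2 * X - 1)).eval 1 = 0 := by
      simp [F, W, pow_succ]
    have hFTC : (∫ x in (0:ℝ)..1, (derivative (F (n+1) * (C 2 * X - 1))).eval x) = 0 := by
      rw [integral_eq_sub_of_hasDerivAt (f := fun x => (F (n+1) * (C 2 * X - 1)).eval x)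
        (fun x _ => Polynomial.hasDerivAt _ x)
        ((contig _).intervalIntegrable 0 1), hG0, hG1, sub_zero]
    rw [hpoly] at hFTC
    have hsplit : (∫ x in (0:ℝ)..1, (C (4*(n:ℝ)+6) * F (n+1) + C ((n:ℝ)+1) * F n).eval x)
        = (4*(n:ℝ)+6) * (∫ x in (0:ℝ)..1, (F (n+1)).eval x)
          + ((n:ℝ)+1) * (∫ x in (0:ℝ)..1, (F n).eval x) := by
      simp only [Polynomial.eval_add, Polynomial.eval_mul, Polynomial.eval_C]
      rw [intervalIntegral.integral_add (f := fun x => (4*(n:ℝ)+6) * (F (n+1)).eval x)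
        (g := fun x => ((n:ℝ)+1) * (F n).eval x)
        ((continuous_const.mul (contig _)).intervalIntegrable 0 1)
        ((continuous_const.mul (contig _)).intervalIntegrable 0 1),
        intervalIntegral.integral_const_mul, intervalIntegral.integral_const_mul]
    rw [hsplit, ih] at hFTC
    have h46 : (4*(n:ℝ)+6) ≠ 0 := by positivity
    have hfacpos : ((2*n+1).factorial : ℝ) ≠ 0 := by positivity
    have hJ : (∫ x in (0:ℝ)..1, (F (n+1)).eval x)
        = (-((n:ℝ)+1) * ((-1:ℝ))^n * ((n.factorial : ℝ))^2)
          / ((4*(n:ℝ)+6) * ((2*n+1).factorial : ℝ)) := by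
      field_simp at hFTC ⊢
      linarith
    rw [hJ]
    have hfac1 : ((2*(n+1)+1).factorial : ℝ)
        = (2*(n:ℝ)+3) * ((2*(n:ℝ)+2) * ((2*n+1).factorial : ℝ)) := by
      have e1 : 2*(n+1)+1 = (2*n+2)+1 := by omega
      have e2 : 2*n+2 = (2*n+1)+1 := by omega
      rw [e1, Nat.factorial_succ, e2, Nat.factorial_succ, ← e2]
      push_cast
      ring
    have hfacn : (((n+1).factorial : ℕ) : ℝ) = ((n:ℝ)+1) * (n.factorial : ℝ) := by
      rw [Nat.factorial_succ]; push_cast; ring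
    rw [hfac1, hfacn, pow_succ]
    field_simp
    ring

lemma ii_comm (p q : ℝ[X]) : ii p q = ii q p := by
  unfold ii; congr 1; ext x; ring

lemma ii_add_left (p p' q : ℝ[X]) : ii (p + p') q = ii p q + ii p' q := by
  unfold ii
  rw [← integral_add (intg p q) (intg p' q)]
  congr 1; ext x; simp; ring

lemma ii_C_mul_left (a : ℝ) (p q : ℝ[X]) : ii (C a * p) q = a * ii p q := by
  unfold ii
  rw [← intervalIntegral.integral_const_mul]
  congr 1; ext x; simp; ring

lemma ii_sum_left {ι : Type*} (s : Finset ι) (f : ι → ℝ[X]) (q : ℝ[X]) :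
    ii (∑ i ∈ s, f i) q = ∑ i ∈ s, ii (f i) q := by
  classical
  induction s using Finset.induction_on with
  | empty => simp [ii]
  | insert a s h ih =>
    rw [Finset.sum_insert h, ii_add_left, ih, Finset.sum_insert h]

lemma selfint (n : ℕ) :
    ii (R n) (R n) = ((n.factorial : ℝ))^2 / (2*(n:ℝ)+1) := by
  rw [selfint_aux, top_deriv]
  simp only [Polynomial.eval_C]
  rw [intervalIntegral.integral_const_mul, intF]
  have hfac : ((2*n+1).factorial : ℝ) = (2*(n:ℝ)+1) * ((2*n).factorial : ℝ) := by
    rw [Nat.factorial_succ]; push_cast; ring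
  have h1 : ((2*n).factorial : ℝ) ≠ 0 := by positivity
  have h2 : (2*(n:ℝ)+1) ≠ 0 := by positivity
  rw [hfac]
  field_simp
  ring_nf
  have hone : (-1 : ℝ)^(n*2) = 1 := by rw [pow_mul']; norm_num
  rw [hone]

noncomputable def Rh (n : ℕ) : ℝ[X] := C (((n.factorial : ℝ))⁻¹) * R n

lemma Rh_eval1 (n : ℕ) : (Rh n).eval 1 = 1 := by
  have : ((n.factorial : ℝ)) ≠ 0 := by positivity
  simp [Rh, eval1_R, this]

lemma natDegree_Rh (n : ℕ) : (Rh n).natDegree ≤ n :=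
  le_trans (Polynomial.natDegree_mul_le) (by simp [natDegree_R n])

lemma coeff_Rh (n : ℕ) : (Rh n).coeff n ≠ 0 := by
  rw [Rh, Polynomial.coeff_C_mul, coeff_R]
  have h1 : ((n.factorial : ℝ)) ≠ 0 := by positivity
  have h2 : (0:ℕ) < (2*n).descFactorial n := by
    rcases Nat.eq_zero_or_pos ((2*n).descFactorial n) with h | h
    · exact absurd (Nat.descFactorial_eq_zero_iff_lt.mp h) (by omega)
    · exact h
  have h2' : (((2*n).descFactorial n : ℕ) : ℝ) ≠ 0 := by positivity
  positivity

lemma ii_Rh_Rh {m n : ℕ} :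
    ii (Rh m) (Rh n) = if m = n then 1/(2*(n:ℝ)+1) else 0 := by
  have hfm : ((m.factorial : ℝ)) ≠ 0 := by positivity
  have hfn : ((n.factorial : ℝ)) ≠ 0 := by positivity
  rw [Rh, Rh, ii_C_mul_left, ii_comm, ii_C_mul_left, ii_comm]
  rcases eq_or_ne m n with rfl | hmn
  · rw [if_pos rfl, selfint]
    have : (2*(m:ℝ)+1) ≠ 0 := by positivity
    field_simp
  · rw [if_neg hmn]
    rcases lt_or_gt_of_ne hmn with h | h
    · rw [orth (lt_of_le_of_lt (natDegree_R m) h)]; ring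
    · rw [ii_comm (R m) (R n), orth (lt_of_le_of_lt (natDegree_R n) h)]; ring

noncomputable def Kk (k : ℕ) : ℝ[X] := ∑ n ∈ Finset.range (k+1), C (2*(n:ℝ)+1) * Rh n

lemma ii_Rh_Kk {m k : ℕ} (hm : m ≤ k) : ii (Rh m) (Kk k) = 1 := by
  rw [ii_comm, Kk, ii_sum_left]
  rw [Finset.sum_eq_single m]
  · rw [ii_C_mul_left, ii_Rh_Rh, if_pos rfl]
    have : (2*(m:ℝ)+1) ≠ 0 := by positivity
    field_simp
  · intro n hn hnm
    rw [ii_C_mul_left, ii_Rh_Rh, if_neg hnm, mul_zero]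
  · intro h
    exact absurd (Finset.mem_range.mpr (by omega)) h

lemma repro (k : ℕ) : ∀ d, d ≤ k → ∀ p : ℝ[X], p.natDegree ≤ d → ii p (Kk k) = p.eval 1 := by
  intro d
  induction d with
  | zero =>
    intro _ p hp
    rw [Polynomial.eq_C_of_natDegree_le_zero hp]
    have hRh0 : Rh 0 = 1 := by
      simp [Rh, R, F]
    have h1 : ii (C (p.coeff 0)) (Kk k) = p.coeff 0 * ii (Rh 0) (Kk k) := by
      rw [← ii_C_mul_left]; congr 1; rw [hRh0, mul_one]
    rw [h1, ii_Rh_Kk (Nat.zero_le k), mul_one, Polynomial.eval_C]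
  | succ d ih =>
    intro hdk p hp
    set b := (Rh (d+1)).coeff (d+1) with hb
    have hbne : b ≠ 0 := coeff_Rh (d+1)
    set c := p.coeff (d+1) / b with hc
    set q := p - C c * Rh (d+1) with hq
    have hqd : q.natDegree ≤ d := by
      rw [Polynomial.natDegree_le_iff_coeff_eq_zero]
      intro N hN
      rcases eq_or_lt_of_le (Nat.succ_le_of_lt hN) with h | h
      · rw [hq, Polynomial.coeff_sub, Polynomial.coeff_C_mul, ← h, ← hb, hc]
        field_simp
        simp
      · have hpN : p.coeff N = 0 :=
          Polynomial.coeff_eq_zero_of_natDegree_lt (lt_of_le_of_lt hp h)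
        have hRN : (Rh (d+1)).coeff N = 0 :=
          Polynomial.coeff_eq_zero_of_natDegree_lt (lt_of_le_of_lt (natDegree_Rh (d+1)) h)
        rw [hq, Polynomial.coeff_sub, Polynomial.coeff_C_mul, hpN, hRN, mul_zero, sub_zero]
    have hpq : p = q + C c * Rh (d+1) := by rw [hq]; ring
    rw [hpq, ii_add_left, ii_C_mul_left, ih (by omega) q hqd, ii_Rh_Kk (by omega)]
    simp [Rh_eval1]

lemma natDegree_Kk (k : ℕ) : (Kk k).natDegree ≤ k := by
  refine le_trans (Polynomial.natDegree_sum_le _ _) ?_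
  rw [Finset.fold_max_le]
  refine ⟨Nat.zero_le _, fun n hn => ?_⟩
  have h1 : (C (2*(n:ℝ)+1) * Rh n).natDegree ≤ n := by
    refine le_trans Polynomial.natDegree_mul_le ?_
    rw [Polynomial.natDegree_C, zero_add]
    exact natDegree_Rh n
  have := Finset.mem_range.mp hn
  simp only [Function.comp_apply]
  omega

lemma Kk_eval1 (k : ℕ) : (Kk k).eval 1 = ((k:ℝ)+1)^2 := by
  rw [Kk, Polynomial.eval_finset_sum]
  simp only [Polynomial.eval_mul, Polynomial.eval_C, Rh_eval1, mul_one]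
  induction k with
  | zero => norm_num
  | succ k ih =>
    rw [Finset.sum_range_succ, ih]
    push_cast
    ring

lemma ii_Kk_Kk (k : ℕ) : ii (Kk k) (Kk k) = ((k:ℝ)+1)^2 := by
  rw [repro k k le_rfl (Kk k) (natDegree_Kk k), Kk_eval1]

lemma trace1D (k : ℕ) (p : ℝ[X]) (hp : p.natDegree ≤ k) :
    (p.eval 1)^2 ≤ ((k:ℝ)+1)^2 * ∫ x in (0:ℝ)..1, (p.eval x)^2 := by
  have i1 := intg (Kk k) (Kk k)
  have i2 := intg p (Kk k)
  have i3 := intg p p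
  have hquad : ∀ t : ℝ, 0 ≤ (ii (Kk k) (Kk k)) * (t*t) + (2 * ii p (Kk k)) * t + ii p p := by
    intro t
    have hexp : (ii (Kk k) (Kk k)) * (t*t) + (2 * ii p (Kk k)) * t + ii p p
        = ∫ x in (0:ℝ)..1, (t * (Kk k).eval x + p.eval x)^2 := by
      have hfun : (fun x => (t * (Kk k).eval x + p.eval x)^2)
          = fun x => (t*t) * ((Kk k).eval x * (Kk k).eval x)
            + ((2*t) * (p.eval x * (Kk k).eval x) + p.eval x * p.eval x) := by
        ext x; ring
      rw [hfun, intervalIntegral.integral_add (i1.const_mul _) ((i2.const_mul _).add i3),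
        intervalIntegral.integral_add (i2.const_mul _) i3,
        intervalIntegral.integral_const_mul, intervalIntegral.integral_const_mul]
      unfold ii
      ring
    rw [hexp]
    apply intervalIntegral.integral_nonneg (by norm_num)
    intro x _
    positivity
  have hd := discrim_le_zero hquad
  rw [discrim] at hd
  have hBsq : (ii p (Kk k))^2 ≤ (ii (Kk k) (Kk k)) * ii p p := by nlinarith [hd]
  have hB1 : ii p (Kk k) = p.eval 1 := repro k k le_rfl p hp
  have hA1 : ii (Kk k) (Kk k) = ((k:ℝ)+1)^2 := ii_Kk_Kk k
  have hCc1 : ii p p = ∫ x in (0:ℝ)..1, (p.eval x)^2 := by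
    unfold ii; congr 1; ext x; ring
  rw [← hB1, ← hA1, ← hCc1]
  exact hBsq

end TraceAux

set_option maxHeartbeats 1000000 in
/-- Discrete trace inequality on the unit square with the sharp constant `(k+1)^2`:
if `v` is a tensor-product polynomial of degree at most `k` in each of the two
variables (i.e. `v ∈ Q_k`), then
`∫ y in (0,1), v(1,y)^2 ≤ (k+1)^2 * ∫ x in (0,1), ∫ y in (0,1), v(x,y)^2`. -/
theorem discrete_trace_inequality_unit_square (k : ℕ) (v : ℝ × ℝ → ℝ)
    (P : MvPolynomial (Fin 2) ℝ)
    (hP : ∀ i : Fin 2, P.degreeOf i ≤ k)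
    (hv : ∀ x y : ℝ, v (x, y) = MvPolynomial.eval ![x, y] P) :
    (∫ y in (0:ℝ)..1, (v (1, y)) ^ 2) ≤
      ((k : ℝ) + 1) ^ 2 * ∫ x in (0:ℝ)..1, ∫ y in (0:ℝ)..1, (v (x, y)) ^ 2 := by
  classical
  -- the slice polynomial in x, for fixed y
  set Q : ℝ → ℝ[X] :=
    fun y => Polynomial.map (MvPolynomial.eval ![y]) (MvPolynomial.finSuccEquiv ℝ 1 P) with hQ
  have hev : ∀ x y : ℝ, MvPolynomial.eval ![x, y] P = (Q y).eval x := by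
    intro x y
    have h := MvPolynomial.eval_eq_eval_mv_eval' (![y]) x P
    have hcons : (Fin.cons x ![y] : Fin 2 → ℝ) = ![x, y] := by
      ext i
      fin_cases i <;> simp
    rw [← hcons]
    exact h
  have hdeg : ∀ y : ℝ, (Q y).natDegree ≤ k := by
    intro y
    refine le_trans Polynomial.natDegree_map_le ?_
    rw [MvPolynomial.natDegree_finSuccEquiv]
    exact hP 0
  -- pointwise 1D trace inequality in x for each y
  have key : ∀ y : ℝ, (v (1, y))^2 ≤ ((k:ℝ)+1)^2 * ∫ x in (0:ℝ)..1, (v (x, y))^2 := by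
    intro y
    have h1 : ∀ x : ℝ, v (x, y) = (Q y).eval x := fun x => (hv x y).trans (hev x y)
    simp only [h1]
    exact TraceAux.trace1D k (Q y) (hdeg y)
  -- continuity facts
  have hcont : Continuous fun q : ℝ × ℝ => (v (q.1, q.2))^2 := by
    have : (fun q : ℝ × ℝ => (v (q.1, q.2))^2)
        = fun q : ℝ × ℝ => (MvPolynomial.eval ![q.1, q.2] P)^2 := by
      ext q; rw [hv]
    rw [this]
    apply Continuous.pow
    apply (MvPolynomial.continuous_eval P).comp
    apply continuous_pi
    intro i
    fin_cases i
    · simpa using continuous_fst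
    · simpa using continuous_snd
  have contLHS : Continuous fun y : ℝ => (v (1, y))^2 :=
    hcont.comp (Continuous.prodMk_right 1)
  have contg : Continuous fun y : ℝ => ∫ x in (0:ℝ)..1, (v (x, y))^2 := by
    apply intervalIntegral.continuous_parametric_intervalIntegral_of_continuous'
      (f := fun y x => (v (x, y))^2) (μ := volume)
    exact hcont.comp (continuous_snd.prodMk continuous_fst)
  -- integrate the pointwise bound in y
  have step1 : (∫ y in (0:ℝ)..1, (v (1, y))^2)
      ≤ ∫ y in (0:ℝ)..1, ((k:ℝ)+1)^2 * ∫ x in (0:ℝ)..1, (v (x, y))^2 := by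
    apply intervalIntegral.integral_mono_on (by norm_num)
      (contLHS.intervalIntegrable 0 1)
      ((continuous_const.mul contg).intervalIntegrable 0 1)
    intro y _
    exact key y
  rw [intervalIntegral.integral_const_mul] at step1
  -- Fubini
  have fubini : (∫ y in (0:ℝ)..1, ∫ x in (0:ℝ)..1, (v (x, y))^2)
      = ∫ x in (0:ℝ)..1, ∫ y in (0:ℝ)..1, (v (x, y))^2 := by
    have h01 : (0:ℝ) ≤ 1 := zero_le_one
    have hswap : Continuous fun q : ℝ × ℝ => (v (q.2, q.1))^2 :=
      hcont.comp (continuous_snd.prodMk continuous_fst)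
    have hcomp : IsCompact ((Set.Icc (0:ℝ) 1) ×ˢ (Set.Icc (0:ℝ) 1)) :=
      isCompact_Icc.prod isCompact_Icc
    have hint : IntegrableOn (fun q : ℝ × ℝ => (v (q.2, q.1))^2)
        ((Set.Icc (0:ℝ) 1) ×ˢ (Set.Icc (0:ℝ) 1)) volume :=
      hswap.continuousOn.integrableOn_compact hcomp
    rw [MeasureTheory.Measure.volume_eq_prod] at hint
    have hu : (Function.uncurry fun (y x : ℝ) => (v (x, y))^2)
        = fun q : ℝ × ℝ => (v (q.2, q.1))^2 := rfl
    rw [← hu] at hint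
    have hint2 : Integrable (Function.uncurry fun (y x : ℝ) => (v (x, y))^2)
        ((volume.restrict (Set.Ioc (0:ℝ) 1)).prod (volume.restrict (Set.Ioc (0:ℝ) 1))) := by
      rw [MeasureTheory.Measure.prod_restrict]
      exact hint.mono_set (Set.prod_mono Set.Ioc_subset_Icc_self Set.Ioc_subset_Icc_self)
    simp only [intervalIntegral.integral_of_le h01]
    exact MeasureTheory.integral_integral_swap hint2
  calc (∫ y in (0:ℝ)..1, (v (1, y))^2)
      ≤ ((k:ℝ)+1)^2 * ∫ y in (0:ℝ)..1, ∫ x in (0:ℝ)..1, (v (x, y))^2 := step1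
    _ = ((k:ℝ)+1)^2 * ∫ x in (0:ℝ)..1, ∫ y in (0:ℝ)..1, (v (x, y))^2 := by rw [fubini]
end

section
/- Let α > 0, let Ω = [0,1] × [0,1], and let u₁, u₂, T : ℝ² → ℝ be twice continuously differentiable on an open set containing Ω, satisfying on Ω the incompressibility constraint ∂u₁/∂x₁ + ∂u₂/∂x₂ = 0 and the steady energy equation u₁ ∂T/∂x₁ + u₂ ∂T/∂x₂ = α (∂²T/∂x₁² + ∂²T/∂x₂²), and on the top and bottom walls u₂(x₁,0) = u₂(x₁,1) = 0 and ∂T/∂x₂(x₁,0) = ∂T/∂x₂(x₁,1) = 0 for all x₁ ∈ [0,1]. Define the line-averaged Nusselt number Nu(a) = (1/α) ∫₀¹ [u₁ T − α ∂T/∂x₁](a,x₂) dx₂ for a ∈ [0,1] and the domain-averaged Nusselt number Nu_avg = (1/α) ∫₀¹ ∫₀¹ [u₁ T − α ∂T/∂x₁](x₁,x₂) dx₂ dx₁. Then Nu(1/2) = Nu_avg; more generally Nu(a) = Nu_avg for every a ∈ [0,1]. -/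
open MeasureTheory

private lemma hasDerivAt_line₁ {f : ℝ × ℝ → ℝ} {a b : ℝ}
    (hf : DifferentiableAt ℝ f (a, b)) :
    HasDerivAt (fun x => f (x, b)) (fderiv ℝ f (a, b) (1, 0)) a := by
  have hline : HasDerivAt (fun x : ℝ => (x, b)) ((1 : ℝ), (0 : ℝ)) a :=
    (hasDerivAt_id a).prodMk (hasDerivAt_const a b)
  exact hf.hasFDerivAt.comp_hasDerivAt a hline

private lemma hasDerivAt_line₂ {f : ℝ × ℝ → ℝ} {a b : ℝ}
    (hf : DifferentiableAt ℝ f (a, b)) :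
    HasDerivAt (fun y => f (a, y)) (fderiv ℝ f (a, b) (0, 1)) b := by
  have hline : HasDerivAt (fun y : ℝ => (a, y)) ((0 : ℝ), (1 : ℝ)) b :=
    (hasDerivAt_const b a).prodMk (hasDerivAt_id b)
  exact hf.hasFDerivAt.comp_hasDerivAt b hline


/-- For the steady differentially heated cavity problem on the unit square, the
line-averaged Nusselt number `Nu(a) = (1/α) ∫₀¹ (u₁ T − α ∂T/∂x₁)(a, x₂) dx₂`
coincides with the domain-averaged Nusselt number
`Nu_avg = (1/α) ∫₀¹ ∫₀¹ (u₁ T − α ∂T/∂x₁)(x₁, x₂) dx₂ dx₁`; in particular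
`Nu(1/2) = Nu_avg`, and more generally `Nu(a) = Nu_avg` for every `a ∈ [0,1]`. -/
theorem nusselt_line_eq_avg
    (α : ℝ) (hα : 0 < α)
    (u₁ u₂ T : ℝ × ℝ → ℝ)
    (U : Set (ℝ × ℝ)) (hU : IsOpen U)
    (hΩU : Set.Icc (0:ℝ) 1 ×ˢ Set.Icc (0:ℝ) 1 ⊆ U)
    (hu₁ : ContDiffOn ℝ 2 u₁ U) (hu₂ : ContDiffOn ℝ 2 u₂ U)
    (hT : ContDiffOn ℝ 2 T U)
    -- incompressibility: ∂u₁/∂x₁ + ∂u₂/∂x₂ = 0 on Ω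
    (hdiv : ∀ p ∈ Set.Icc (0:ℝ) 1 ×ˢ Set.Icc (0:ℝ) 1,
      fderiv ℝ u₁ p (1, 0) + fderiv ℝ u₂ p (0, 1) = 0)
    -- steady energy equation: u·∇T = α ΔT on Ω
    (henergy : ∀ p ∈ Set.Icc (0:ℝ) 1 ×ˢ Set.Icc (0:ℝ) 1,
      u₁ p * fderiv ℝ T p (1, 0) + u₂ p * fderiv ℝ T p (0, 1) =
        α * (fderiv ℝ (fun q => fderiv ℝ T q (1, 0)) p (1, 0) +
             fderiv ℝ (fun q => fderiv ℝ T q (0, 1)) p (0, 1)))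
    -- impermeable top and bottom walls
    (hwall : ∀ x₁ ∈ Set.Icc (0:ℝ) 1, u₂ (x₁, 0) = 0 ∧ u₂ (x₁, 1) = 0)
    -- adiabatic top and bottom walls
    (hadia : ∀ x₁ ∈ Set.Icc (0:ℝ) 1,
      fderiv ℝ T (x₁, 0) (0, 1) = 0 ∧ fderiv ℝ T (x₁, 1) (0, 1) = 0)
    -- line-averaged Nusselt number
    (Nu : ℝ → ℝ)
    (hNu : ∀ a : ℝ, Nu a = (1 / α) * ∫ x₂ in (0:ℝ)..1,
      (u₁ (a, x₂) * T (a, x₂) - α * fderiv ℝ T (a, x₂) (1, 0)))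
    -- domain-averaged Nusselt number
    (NuAvg : ℝ)
    (hNuAvg : NuAvg = (1 / α) * ∫ x₁ in (0:ℝ)..1, ∫ x₂ in (0:ℝ)..1,
      (u₁ (x₁, x₂) * T (x₁, x₂) - α * fderiv ℝ T (x₁, x₂) (1, 0))) :
    Nu (1 / 2) = NuAvg ∧ ∀ a ∈ Set.Icc (0:ℝ) 1, Nu a = NuAvg := by
  classical
  -- membership helper
  have hmem : ∀ {x y : ℝ}, x ∈ Set.Icc (0:ℝ) 1 → y ∈ Set.Icc (0:ℝ) 1 → (x, y) ∈ U :=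
    fun hx hy => hΩU (Set.mk_mem_prod hx hy)
  have hmemΩ : ∀ {x y : ℝ}, x ∈ Set.Icc (0:ℝ) 1 → y ∈ Set.Icc (0:ℝ) 1 →
      (x, y) ∈ Set.Icc (0:ℝ) 1 ×ˢ Set.Icc (0:ℝ) 1 := fun hx hy => Set.mk_mem_prod hx hy
  -- differentiability facts
  have hTd : ∀ p ∈ U, DifferentiableAt ℝ T p := fun p hp =>
    (hT.contDiffAt (hU.mem_nhds hp)).differentiableAt two_ne_zero
  have hu₁d : ∀ p ∈ U, DifferentiableAt ℝ u₁ p := fun p hp =>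
    (hu₁.contDiffAt (hU.mem_nhds hp)).differentiableAt two_ne_zero
  have hu₂d : ∀ p ∈ U, DifferentiableAt ℝ u₂ p := fun p hp =>
    (hu₂.contDiffAt (hU.mem_nhds hp)).differentiableAt two_ne_zero
  have hT1 : ContDiffOn ℝ 1 (fun q => fderiv ℝ T q (1, 0)) U :=
    (hT.fderiv_of_isOpen hU (by norm_num)).clm_apply contDiffOn_const
  have hT2 : ContDiffOn ℝ 1 (fun q => fderiv ℝ T q (0, 1)) U :=
    (hT.fderiv_of_isOpen hU (by norm_num)).clm_apply contDiffOn_const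
  have hT1d : ∀ p ∈ U, DifferentiableAt ℝ (fun q => fderiv ℝ T q (1, 0)) p := fun p hp =>
    (hT1.contDiffAt (hU.mem_nhds hp)).differentiableAt one_ne_zero
  have hT2d : ∀ p ∈ U, DifferentiableAt ℝ (fun q => fderiv ℝ T q (0, 1)) p := fun p hp =>
    (hT2.contDiffAt (hU.mem_nhds hp)).differentiableAt one_ne_zero
  -- the flux integrand and its relevant partial derivatives
  set f : ℝ × ℝ → ℝ := fun p => u₁ p * T p - α * fderiv ℝ T p (1, 0) with hf_def
  set g₁ : ℝ × ℝ → ℝ := fun p =>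
    fderiv ℝ u₁ p (1, 0) * T p + u₁ p * fderiv ℝ T p (1, 0) -
      α * fderiv ℝ (fun q => fderiv ℝ T q (1, 0)) p (1, 0) with hg₁_def
  set g₂ : ℝ × ℝ → ℝ := fun p =>
    α * fderiv ℝ (fun q => fderiv ℝ T q (0, 1)) p (0, 1) -
      (fderiv ℝ u₂ p (0, 1) * T p + u₂ p * fderiv ℝ T p (0, 1)) with hg₂_def
  -- continuity facts
  have cf : ContinuousOn f U :=
    ((hu₁.continuousOn).mul (hT.continuousOn)).sub (continuousOn_const.mul hT1.continuousOn)
  have cg₁ : ContinuousOn g₁ U := by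
    refine ContinuousOn.sub (ContinuousOn.add (ContinuousOn.mul ?_ hT.continuousOn)
        ((hu₁.continuousOn).mul hT1.continuousOn))
      (continuousOn_const.mul ?_)
    · exact ((hu₁.continuousOn_fderiv_of_isOpen hU one_le_two).clm_apply continuousOn_const)
    · exact ((hT1.continuousOn_fderiv_of_isOpen hU le_rfl).clm_apply continuousOn_const)
  have cg₂ : ContinuousOn g₂ U := by
    refine ContinuousOn.sub (continuousOn_const.mul ?_)
      (ContinuousOn.add (ContinuousOn.mul ?_ hT.continuousOn)
        ((hu₂.continuousOn).mul hT2.continuousOn))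
    · exact ((hT2.continuousOn_fderiv_of_isOpen hU le_rfl).clm_apply continuousOn_const)
    · exact ((hu₂.continuousOn_fderiv_of_isOpen hU one_le_two).clm_apply continuousOn_const)
  -- line integrability of a continuous-on-U function, vertical lines
  have lineIntV : ∀ (φ : ℝ × ℝ → ℝ), ContinuousOn φ U → ∀ c ∈ Set.Icc (0:ℝ) 1,
      IntervalIntegrable (fun x₂ => φ (c, x₂)) volume 0 1 := by
    intro φ hφ c hc
    apply ContinuousOn.intervalIntegrable
    rw [Set.uIcc_of_le zero_le_one]
    exact hφ.comp ((Continuous.prodMk_right c).continuousOn) (fun y hy => hmem hc hy)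
  -- g₁ = g₂ on Ω
  have hg12 : ∀ p ∈ Set.Icc (0:ℝ) 1 ×ˢ Set.Icc (0:ℝ) 1, g₁ p = g₂ p := by
    intro p hp
    have h1 := hdiv p hp
    have h2 := henergy p hp
    simp only [hg₁_def, hg₂_def]
    linear_combination T p * h1 + h2
  -- the key constancy claim
  have key : ∀ a ∈ Set.Icc (0:ℝ) 1,
      (∫ x₂ in (0:ℝ)..1, f (a, x₂)) = ∫ x₂ in (0:ℝ)..1, f (0, x₂) := by
    rintro a ⟨ha0, ha1⟩
    have ha : a ∈ Set.Icc (0:ℝ) 1 := ⟨ha0, ha1⟩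
    have h0 : (0:ℝ) ∈ Set.Icc (0:ℝ) 1 := ⟨le_rfl, zero_le_one⟩
    have hsubI : Set.uIcc (0:ℝ) a ⊆ Set.Icc (0:ℝ) 1 := by
      rw [Set.uIcc_of_le ha0]; exact Set.Icc_subset_Icc le_rfl ha1
    rw [← sub_eq_zero, ← intervalIntegral.integral_sub (lineIntV f cf a ha) (lineIntV f cf 0 h0)]
    -- pointwise: f(a,x₂) - f(0,x₂) = ∫ x₁ in 0..a, g₂(x₁,x₂)
    have inner : ∀ x₂ ∈ Set.uIcc (0:ℝ) 1,
        f (a, x₂) - f (0, x₂) = ∫ x₁ in (0:ℝ)..a, g₂ (x₁, x₂) := by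
      intro x₂ hx₂
      rw [Set.uIcc_of_le zero_le_one] at hx₂
      have ftc : (∫ x₁ in (0:ℝ)..a, g₁ (x₁, x₂)) = f (a, x₂) - f (0, x₂) := by
        apply intervalIntegral.integral_eq_sub_of_hasDerivAt
        · intro x hx
          have hpU : (x, x₂) ∈ U := hmem (hsubI hx) hx₂
          exact ((hasDerivAt_line₁ (hu₁d _ hpU)).mul (hasDerivAt_line₁ (hTd _ hpU))).sub
            ((hasDerivAt_line₁ (hT1d _ hpU)).const_mul α)
        · apply ContinuousOn.intervalIntegrable
          exact cg₁.comp ((Continuous.prodMk continuous_id continuous_const).continuousOn)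
            (fun x hx => hmem (hsubI hx) hx₂)
      rw [← ftc]
      apply intervalIntegral.integral_congr
      intro x hx
      exact hg12 (x, x₂) (hmemΩ (hsubI hx) hx₂)
    rw [intervalIntegral.integral_congr inner]
    -- Fubini
    have hswap : (∫ x₂ in (0:ℝ)..1, ∫ x₁ in (0:ℝ)..a, g₂ (x₁, x₂)) =
        ∫ x₁ in (0:ℝ)..a, ∫ x₂ in (0:ℝ)..1, g₂ (x₁, x₂) := by
      simp only [intervalIntegral.integral_of_le ha0, intervalIntegral.integral_of_le
        (zero_le_one (α := ℝ))]
      apply MeasureTheory.integral_integral_swap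
      rw [Measure.prod_restrict, ← Measure.volume_eq_prod]
      have hcont : ContinuousOn (Function.uncurry fun x₂ x₁ => g₂ (x₁, x₂))
          (Set.Icc (0:ℝ) 1 ×ˢ Set.Icc (0:ℝ) a) := by
        refine cg₂.comp continuous_swap.continuousOn ?_
        rintro ⟨y, x⟩ ⟨hy, hx⟩
        exact hmem (Set.Icc_subset_Icc le_rfl ha1 hx) hy
      exact (hcont.integrableOn_compact (isCompact_Icc.prod isCompact_Icc)).mono_set
        (Set.prod_mono Set.Ioc_subset_Icc_self Set.Ioc_subset_Icc_self)
    rw [hswap]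
    -- inner vertical integral vanishes
    have hvert : ∀ x₁ ∈ Set.uIcc (0:ℝ) a, (∫ x₂ in (0:ℝ)..1, g₂ (x₁, x₂)) = 0 := by
      intro x₁ hx₁
      have hx₁' : x₁ ∈ Set.Icc (0:ℝ) 1 := hsubI hx₁
      have ftc : (∫ x₂ in (0:ℝ)..1, g₂ (x₁, x₂)) =
          (α * fderiv ℝ T (x₁, 1) (0, 1) - u₂ (x₁, 1) * T (x₁, 1)) -
          (α * fderiv ℝ T (x₁, 0) (0, 1) - u₂ (x₁, 0) * T (x₁, 0)) := by
        apply intervalIntegral.integral_eq_sub_of_hasDerivAt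
          (f := fun y => α * fderiv ℝ T (x₁, y) (0, 1) - u₂ (x₁, y) * T (x₁, y))
        · intro y hy
          rw [Set.uIcc_of_le zero_le_one] at hy
          have hpU : (x₁, y) ∈ U := hmem hx₁' hy
          exact ((hasDerivAt_line₂ (hT2d _ hpU)).const_mul α).sub
            ((hasDerivAt_line₂ (hu₂d _ hpU)).mul (hasDerivAt_line₂ (hTd _ hpU)))
        · apply ContinuousOn.intervalIntegrable
          rw [Set.uIcc_of_le zero_le_one]
          exact cg₂.comp ((Continuous.prodMk_right x₁).continuousOn) (fun y hy => hmem hx₁' hy)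
      rw [ftc, (hadia x₁ hx₁').1, (hadia x₁ hx₁').2, (hwall x₁ hx₁').1, (hwall x₁ hx₁').2]
      ring
    rw [intervalIntegral.integral_congr hvert]
    simp
  -- assemble
  have hNu' : ∀ a ∈ Set.Icc (0:ℝ) 1, Nu a = (1 / α) * ∫ x₂ in (0:ℝ)..1, f (0, x₂) := by
    intro a ha
    rw [hNu a]
    congr 1
    exact key a ha
  have havg : NuAvg = (1 / α) * ∫ x₂ in (0:ℝ)..1, f (0, x₂) := by
    rw [hNuAvg]
    congr 1
    have : (∫ x₁ in (0:ℝ)..1, ∫ x₂ in (0:ℝ)..1, f (x₁, x₂)) =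
        ∫ x₁ in (0:ℝ)..1, ∫ x₂ in (0:ℝ)..1, f (0, x₂) := by
      apply intervalIntegral.integral_congr
      intro x hx
      rw [Set.uIcc_of_le zero_le_one] at hx
      exact key x hx
    rw [this]
    simp
  constructor
  · rw [hNu' (1/2) (by norm_num), havg]
  · intro a ha
    rw [hNu' a ha, havg]
end
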